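/- (Exact communication lower bound via spread) Let |ψ⟩ be a unit vector in ℂ^{d_A} ⊗ ℂ^{d_B} with Schmidt rank r and largest Schmidt coefficient λ_1. Suppose |ψ'⟩ is obtained from |ψ⟩ by transferring one qubit across the cut, i.e., |ψ'⟩ is the same vector viewed under a repartition in which a 2-dimensional tensor factor moves from the A side to the B side (or vice versa). Then the Schmidt rank r' and largest Schmidt coefficient λ_1' of |ψ'⟩ satisfy r/2 ≤ r' ≤ 2r and λ_1/2 ≤ λ_1' ≤ 2λ_1; consequently log(r'λ_1') ≤ log(rλ_1) + 2. -/

import Mathlib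

open Matrix

section Aux
section Aux

variable {m n : Type*}

lemma aux_re_conj_mul (z : ℂ) : (star z * z).re = ‖z‖ ^ 2 := by
  have h : star z * z = ((Complex.normSq z : ℝ) : ℂ) := by
    rw [Complex.normSq_eq_conj_mul_self]; rfl
  rw [h, Complex.ofReal_re, Complex.sq_norm]

lemma aux_norm_sum [Fintype n] (v : n → ℂ) :
    Complex.re (star v ⬝ᵥ v) = ∑ i, ‖v i‖ ^ 2 := by
  rw [dotProduct, Complex.re_sum]
  exact Finset.sum_congr rfl fun i _ => aux_re_conj_mul (v i)

lemma aux_quad_eq [Fintype m] [Fintype n] (M : Matrix m n ℂ) (x : m → ℂ) :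
    Complex.re (star x ⬝ᵥ (M * Mᴴ) *ᵥ x) = ∑ j, ‖(Mᴴ *ᵥ x) j‖ ^ 2 := by
  have h1 : star x ᵥ* M = star (Mᴴ *ᵥ x) := by
    rw [star_mulVec, conjTranspose_conjTranspose]
  rw [← mulVec_mulVec, dotProduct_mulVec, h1, aux_norm_sum]

lemma aux_quad_le [Fintype n] [DecidableEq n] [Nonempty n]
    {A : Matrix n n ℂ} (hA : A.IsHermitian) (x : n → ℂ) :
    Complex.re (star x ⬝ᵥ A *ᵥ x) ≤ (⨆ i, hA.eigenvalues i) * ∑ i, ‖x i‖ ^ 2 := by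
  have hco : (RCLike.ofReal : ℝ → ℂ) = Complex.ofReal := rfl
  have key : ∀ (U : Matrix n n ℂ) (d : n → ℝ) (μ : ℝ), U * star U = 1 → (∀ i, d i ≤ μ) →
      Complex.re (star x ⬝ᵥ (U * diagonal ((RCLike.ofReal : ℝ → ℂ) ∘ d) * star U) *ᵥ x)
        ≤ μ * ∑ i, ‖x i‖ ^ 2 := by
    intro U d μ hU hd
    set y : n → ℂ := star U *ᵥ x with hy
    have h5 : star y = star x ᵥ* U := by
      rw [hy, star_mulVec, star_eq_conjTranspose, conjTranspose_conjTranspose]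
    have hnorm : ∑ i, ‖y i‖ ^ 2 = ∑ i, ‖x i‖ ^ 2 := by
      rw [← aux_norm_sum, ← aux_norm_sum]
      have h6 : star y ⬝ᵥ y = star x ⬝ᵥ x := by
        calc star y ⬝ᵥ y = (star x ᵥ* U) ⬝ᵥ (star U *ᵥ x) := by rw [h5, hy]
          _ = star x ⬝ᵥ U *ᵥ (star U *ᵥ x) := (dotProduct_mulVec _ _ _).symm
          _ = star x ⬝ᵥ x := by rw [mulVec_mulVec, hU, one_mulVec]
      rw [h6]
    have hAx : star x ⬝ᵥ (U * diagonal ((RCLike.ofReal : ℝ → ℂ) ∘ d) * star U) *ᵥ x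
        = star y ⬝ᵥ diagonal ((RCLike.ofReal : ℝ → ℂ) ∘ d) *ᵥ y := by
      rw [show (U * diagonal ((RCLike.ofReal : ℝ → ℂ) ∘ d) * star U) *ᵥ x
            = U *ᵥ (diagonal ((RCLike.ofReal : ℝ → ℂ) ∘ d) *ᵥ (star U *ᵥ x)) by
          rw [mulVec_mulVec, mulVec_mulVec],
        dotProduct_mulVec, ← h5, ← hy]
    rw [hAx]
    have hquad : Complex.re (star y ⬝ᵥ diagonal ((RCLike.ofReal : ℝ → ℂ) ∘ d) *ᵥ y)
        = ∑ i, d i * ‖y i‖ ^ 2 := by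
      simp only [dotProduct, Complex.re_sum, mulVec_diagonal, Function.comp_apply, hco, Pi.star_apply]
      refine Finset.sum_congr rfl fun i _ => ?_
      rw [show star (y i) * ((d i : ℂ) * y i) = (d i : ℂ) * (star (y i) * y i) by ring,
        Complex.re_ofReal_mul, aux_re_conj_mul]
    rw [hquad, ← hnorm, Finset.mul_sum]
    refine Finset.sum_le_sum fun i _ => ?_
    exact mul_le_mul_of_nonneg_right (hd i) (by positivity)
  have h := key (hA.eigenvectorUnitary : Matrix n n ℂ) hA.eigenvalues (⨆ i, hA.eigenvalues i)
    (Matrix.mem_unitaryGroup_iff.mp hA.eigenvectorUnitary.2)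
    (fun i => le_ciSup (Set.finite_range _).bddAbove i)
  have e := hA.spectral_theorem
  simp only [Unitary.conjStarAlgAut_apply, Unitary.coe_star] at e
  rwa [← e] at h

lemma aux_exists_max [Fintype n] [DecidableEq n] [Nonempty n]
    {A : Matrix n n ℂ} (hA : A.IsHermitian) :
    ∃ x : n → ℂ, (∑ i, ‖x i‖ ^ 2 = 1) ∧
      Complex.re (star x ⬝ᵥ A *ᵥ x) = ⨆ i, hA.eigenvalues i := by
  obtain ⟨i₀, hi₀⟩ := Finite.exists_max hA.eigenvalues
  have hsup : (⨆ i, hA.eigenvalues i) = hA.eigenvalues i₀ :=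
    le_antisymm (ciSup_le hi₀) (le_ciSup (Set.finite_range _).bddAbove i₀)
  set x : n → ℂ := ⇑(hA.eigenvectorBasis i₀) with hx
  have hx1 : ∑ i, ‖x i‖ ^ 2 = 1 := by
    have hb := hA.eigenvectorBasis.orthonormal.1 i₀
    have hne := EuclideanSpace.norm_eq (hA.eigenvectorBasis i₀)
    rw [hb] at hne
    have hnn : (0:ℝ) ≤ ∑ i, ‖hA.eigenvectorBasis i₀ i‖ ^ 2 :=
      Finset.sum_nonneg fun i _ => by positivity
    have h2 : ∑ i, ‖hA.eigenvectorBasis i₀ i‖ ^ 2 = 1 := by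
      nlinarith [Real.sq_sqrt hnn]
    simpa using h2
  refine ⟨x, hx1, ?_⟩
  have hAx : A *ᵥ x = hA.eigenvalues i₀ • x := hA.mulVec_eigenvectorBasis i₀
  rw [hAx, hsup]
  have h3 : star x ⬝ᵥ hA.eigenvalues i₀ • x
      = ((hA.eigenvalues i₀ : ℝ) : ℂ) * (star x ⬝ᵥ x) := by
    simp only [dotProduct, Pi.smul_apply, Complex.real_smul, Finset.mul_sum]
    exact Finset.sum_congr rfl fun i _ => by ring
  rw [h3, Complex.re_ofReal_mul, aux_norm_sum, hx1, mul_one]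

lemma aux_rank_add_le [Fintype m] [Fintype n] (A B : Matrix m n ℂ) :
    (A + B).rank ≤ A.rank + B.rank := by
  classical
  have h : LinearMap.range (A + B).mulVecLin ≤
      LinearMap.range A.mulVecLin ⊔ LinearMap.range B.mulVecLin := by
    rw [Matrix.mulVecLin_add]
    rintro z ⟨w, rfl⟩
    exact Submodule.mem_sup.2 ⟨A.mulVecLin w, ⟨w, rfl⟩, B.mulVecLin w, ⟨w, rfl⟩, rfl⟩
  exact (Submodule.finrank_mono h).trans
    (Submodule.finrank_add_le_finrank_add_finrank _ _)

lemma aux_rank_pos [Fintype m] [Fintype n] [DecidableEq n]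
    {A : Matrix m n ℂ} (h : A ≠ 0) : 0 < A.rank := by
  rw [pos_iff_ne_zero]
  intro h0
  apply h
  have hrange : LinearMap.range A.mulVecLin = ⊥ := Submodule.finrank_eq_zero.1 h0
  ext i j
  have h1 : A.mulVecLin (Pi.single j 1) = 0 := by
    have h2 : A.mulVecLin (Pi.single j 1) ∈ LinearMap.range A.mulVecLin := ⟨_, rfl⟩
    rw [hrange] at h2
    simpa using h2
  have h3 := congrFun h1 i
  simpa [Matrix.mulVecLin_apply, Matrix.mulVec_single] using h3

end Aux

/-- Exact communication lower bound via spread: moving one qubit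
(a dimension-2 tensor factor) across the cut — i.e. reshaping the coefficient matrix
`ψ : (ℂ²⊗ℂ^a) × ℂ^b` into `ψ' : ℂ^a × (ℂ²⊗ℂ^b)` — changes the Schmidt rank and the
largest Schmidt coefficient by at most a factor of 2 in each direction; consequently
`log₂(r'λ₁') ≤ log₂(rλ₁) + 2`. -/
theorem stmt_19 {a b : ℕ} (ha : 0 < a) (hb : 0 < b)
    (ψ : Matrix (Fin 2 × Fin a) (Fin b) ℂ)
    (hψ : ∑ i, ∑ j, ‖ψ i j‖ ^ 2 = 1) :
    let ψ' : Matrix (Fin a) (Fin 2 × Fin b) ℂ := Matrix.of fun i sj => ψ (sj.1, i) sj.2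
    let lam1 : ℝ := ⨆ i, (Matrix.isHermitian_mul_conjTranspose_self ψ).eigenvalues i
    let lam1' : ℝ := ⨆ i, (Matrix.isHermitian_mul_conjTranspose_self ψ').eigenvalues i
    ψ.rank ≤ 2 * ψ'.rank ∧ ψ'.rank ≤ 2 * ψ.rank ∧
      lam1 ≤ 2 * lam1' ∧ lam1' ≤ 2 * lam1 ∧
      Real.logb 2 ((ψ'.rank : ℝ) * lam1') ≤ Real.logb 2 ((ψ.rank : ℝ) * lam1) + 2 := by
  intro ψ' lam1 lam1'
  classical
  haveI : Nonempty (Fin a) := ⟨⟨0, ha⟩⟩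
  haveI : Nonempty (Fin b) := ⟨⟨0, hb⟩⟩
  -- selection matrices
  set P : Fin 2 → Matrix (Fin a) (Fin 2 × Fin a) ℂ :=
    fun s => Matrix.of fun i p => if p = (s, i) then 1 else 0 with hP
  set F : Fin 2 → Matrix (Fin b) (Fin 2 × Fin b) ℂ :=
    fun s => Matrix.of fun j p => if p = (s, j) then 1 else 0 with hF
  have hψ'_decomp : ψ' = P 0 * ψ * F 0 + P 1 * ψ * F 1 := by
    ext i tj
    obtain ⟨t, j⟩ := tj
    simp only [Matrix.add_apply, Matrix.mul_apply, hP, hF, Matrix.of_apply,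
      Finset.sum_mul, ite_mul, one_mul, zero_mul, mul_ite, mul_one, mul_zero]
    simp only [Prod.mk.injEq, ite_and, Finset.sum_ite_eq', Finset.sum_ite_eq,
      Finset.sum_ite_irrel, Finset.sum_const_zero, Finset.mem_univ, if_true]
    fin_cases t <;> simp [ψ']
  have hψ_decomp : ψ = (P 0)ᵀ * ψ' * (F 0)ᵀ + (P 1)ᵀ * ψ' * (F 1)ᵀ := by
    ext ti j
    obtain ⟨t, i⟩ := ti
    simp only [Matrix.add_apply, Matrix.mul_apply, hP, hF, Matrix.of_apply,
      Matrix.transpose_apply, Finset.sum_mul, ite_mul, one_mul, zero_mul,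
      mul_ite, mul_one, mul_zero]
    simp only [Prod.mk.injEq, ite_and, Finset.sum_ite_eq', Finset.sum_ite_eq,
      Finset.sum_ite_irrel, Finset.sum_const_zero, Finset.mem_univ, if_true]
    fin_cases t <;> simp [ψ']
  have hr1 : ψ'.rank ≤ 2 * ψ.rank := by
    have hs : ∀ s : Fin 2, (P s * ψ * F s).rank ≤ ψ.rank := fun s =>
      le_trans (Matrix.rank_mul_le_left _ _) (Matrix.rank_mul_le_right _ _)
    calc ψ'.rank = (P 0 * ψ * F 0 + P 1 * ψ * F 1).rank := by rw [← hψ'_decomp]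
      _ ≤ (P 0 * ψ * F 0).rank + (P 1 * ψ * F 1).rank := aux_rank_add_le _ _
      _ ≤ ψ.rank + ψ.rank := add_le_add (hs 0) (hs 1)
      _ = 2 * ψ.rank := by ring
  have hr2 : ψ.rank ≤ 2 * ψ'.rank := by
    have hs : ∀ s : Fin 2, ((P s)ᵀ * ψ' * (F s)ᵀ).rank ≤ ψ'.rank := fun s =>
      le_trans (Matrix.rank_mul_le_left _ _) (Matrix.rank_mul_le_right _ _)
    calc ψ.rank = ((P 0)ᵀ * ψ' * (F 0)ᵀ + (P 1)ᵀ * ψ' * (F 1)ᵀ).rank := by rw [← hψ_decomp]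
      _ ≤ ((P 0)ᵀ * ψ' * (F 0)ᵀ).rank + ((P 1)ᵀ * ψ' * (F 1)ᵀ).rank := aux_rank_add_le _ _
      _ ≤ ψ'.rank + ψ'.rank := add_le_add (hs 0) (hs 1)
      _ = 2 * ψ'.rank := by ring
  -- bridging identities
  have key_eq : ∀ (s : Fin 2) (y : Fin a → ℂ) (j : Fin b),
      (ψᴴ *ᵥ fun p : Fin 2 × Fin a => if p.1 = s then y p.2 else 0) j = (ψ'ᴴ *ᵥ y) (s, j) := by
    intro s y j
    simp only [mulVec, dotProduct, conjTranspose_apply, Fintype.sum_prod_type, mul_ite, mul_zero]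
    simp only [Finset.sum_ite_irrel, Finset.sum_const_zero, Finset.sum_ite_eq',
      Finset.mem_univ, if_true]
    rfl
  have key_eq2 : ∀ (x : Fin 2 × Fin a → ℂ) (j : Fin b),
      (ψᴴ *ᵥ x) j = (ψ'ᴴ *ᵥ fun i => x (0, i)) ((0 : Fin 2), j)
        + (ψ'ᴴ *ᵥ fun i => x (1, i)) ((1 : Fin 2), j) := by
    intro x j
    simp only [mulVec, dotProduct, conjTranspose_apply, Fintype.sum_prod_type, Fin.sum_univ_two]
    rfl
  have hxs_norm : ∀ (s : Fin 2) (y : Fin a → ℂ),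
      (∑ p : Fin 2 × Fin a, ‖(if p.1 = s then y p.2 else 0 : ℂ)‖ ^ 2)
        = ∑ i, ‖y i‖ ^ 2 := by
    intro s y
    rw [Fintype.sum_prod_type]
    simp only [show ∀ (t : Fin 2) (i : Fin a),
        ‖if t = s then y i else 0‖ ^ 2
          = if t = s then ‖y i‖ ^ 2 else 0 from fun t i => by split <;> simp,
      Finset.sum_ite_irrel, Finset.sum_const_zero, Finset.sum_ite_eq', Finset.mem_univ, if_true]
  -- eigenvalue inequalities
  have hlam1'_le : lam1' ≤ 2 * lam1 := by
    obtain ⟨y, hy1, hy2⟩ := aux_exists_max (Matrix.isHermitian_mul_conjTranspose_self ψ')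
    have hQ : lam1' = ∑ p : Fin 2 × Fin b, ‖(ψ'ᴴ *ᵥ y) p‖ ^ 2 := by
      rw [show lam1' = ⨆ i, (Matrix.isHermitian_mul_conjTranspose_self ψ').eigenvalues i from rfl,
        ← hy2, aux_quad_eq]
    have hterm : ∀ s : Fin 2, (∑ j, ‖(ψ'ᴴ *ᵥ y) (s, j)‖ ^ 2) ≤ lam1 := by
      intro s
      set xs : Fin 2 × Fin a → ℂ := fun p => if p.1 = s then y p.2 else 0 with hxs
      have h1 : ∑ j, ‖(ψ'ᴴ *ᵥ y) (s, j)‖ ^ 2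
          = Complex.re (star xs ⬝ᵥ (ψ * ψᴴ) *ᵥ xs) := by
        rw [aux_quad_eq]
        exact (Finset.sum_congr rfl fun j _ => by rw [← key_eq s y j]).symm
      have h2 := aux_quad_le (Matrix.isHermitian_mul_conjTranspose_self ψ) xs
      have h3 : ∑ p : Fin 2 × Fin a, ‖xs p‖ ^ 2 = 1 := by
        rw [hxs]
        simpa using (hxs_norm s y).trans hy1
      calc ∑ j, ‖(ψ'ᴴ *ᵥ y) (s, j)‖ ^ 2
          = Complex.re (star xs ⬝ᵥ (ψ * ψᴴ) *ᵥ xs) := h1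
        _ ≤ lam1 * ∑ p, ‖xs p‖ ^ 2 := h2
        _ = lam1 := by rw [h3, mul_one]
    calc lam1' = ∑ p : Fin 2 × Fin b, ‖(ψ'ᴴ *ᵥ y) p‖ ^ 2 := hQ
      _ = (∑ j, ‖(ψ'ᴴ *ᵥ y) ((0 : Fin 2), j)‖ ^ 2)
          + ∑ j, ‖(ψ'ᴴ *ᵥ y) ((1 : Fin 2), j)‖ ^ 2 := by
        rw [Fintype.sum_prod_type, Fin.sum_univ_two]
      _ ≤ lam1 + lam1 := add_le_add (hterm 0) (hterm 1)
      _ = 2 * lam1 := by ring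
  have hlam1_le : lam1 ≤ 2 * lam1' := by
    obtain ⟨x, hx1, hx2⟩ := aux_exists_max (Matrix.isHermitian_mul_conjTranspose_self ψ)
    set x0 : Fin a → ℂ := fun i => x (0, i) with hx0def
    set x1 : Fin a → ℂ := fun i => x (1, i) with hx1def
    have habs : ∀ u v : ℂ, ‖u + v‖ ^ 2
        ≤ 2 * ‖u‖ ^ 2 + 2 * ‖v‖ ^ 2 := by
      intro u v
      have h := norm_add_le u v
      have h2 : ‖u + v‖ ^ 2 ≤ (‖u‖ + ‖v‖) ^ 2 :=
        pow_le_pow_left₀ (norm_nonneg _) h 2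
      nlinarith [sq_nonneg (‖u‖ - ‖v‖), h2]
    have hpart : ∀ (z : Fin a → ℂ) (s : Fin 2),
        (∑ j, ‖(ψ'ᴴ *ᵥ z) (s, j)‖ ^ 2) ≤ lam1' * ∑ i, ‖z i‖ ^ 2 := by
      intro z s
      have h2 := aux_quad_le (Matrix.isHermitian_mul_conjTranspose_self ψ') z
      rw [aux_quad_eq] at h2
      refine le_trans ?_ h2
      rw [Fintype.sum_prod_type, Fin.sum_univ_two]
      fin_cases s
      · exact le_add_of_nonneg_right (Finset.sum_nonneg fun j _ => by positivity)
      · exact le_add_of_nonneg_left (Finset.sum_nonneg fun j _ => by positivity)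
    have hsum : (∑ i, ‖x0 i‖ ^ 2) + (∑ i, ‖x1 i‖ ^ 2) = 1 := by
      have h := hx1
      rw [Fintype.sum_prod_type, Fin.sum_univ_two] at h
      exact h
    calc lam1 = ∑ j, ‖(ψᴴ *ᵥ x) j‖ ^ 2 := by
          rw [show lam1 = ⨆ i, (Matrix.isHermitian_mul_conjTranspose_self ψ).eigenvalues i
            from rfl, ← hx2, aux_quad_eq]
      _ ≤ ∑ j, (2 * ‖(ψ'ᴴ *ᵥ x0) ((0 : Fin 2), j)‖ ^ 2
          + 2 * ‖(ψ'ᴴ *ᵥ x1) ((1 : Fin 2), j)‖ ^ 2) := by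
          refine Finset.sum_le_sum fun j _ => ?_
          rw [key_eq2 x j]
          exact habs _ _
      _ = 2 * (∑ j, ‖(ψ'ᴴ *ᵥ x0) ((0 : Fin 2), j)‖ ^ 2)
          + 2 * (∑ j, ‖(ψ'ᴴ *ᵥ x1) ((1 : Fin 2), j)‖ ^ 2) := by
          rw [Finset.sum_add_distrib, Finset.mul_sum, Finset.mul_sum]
      _ ≤ 2 * (lam1' * ∑ i, ‖x0 i‖ ^ 2)
          + 2 * (lam1' * ∑ i, ‖x1 i‖ ^ 2) :=
          add_le_add (mul_le_mul_of_nonneg_left (hpart x0 0) (by norm_num))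
            (mul_le_mul_of_nonneg_left (hpart x1 1) (by norm_num))
      _ = 2 * lam1' := by linear_combination (2 * lam1') * hsum
  -- positivity
  have hrow : ∃ p : Fin 2 × Fin a, 0 < ∑ j, ‖ψ p j‖ ^ 2 := by
    by_contra h
    push_neg at h
    have h0 : ∑ i, ∑ j, ‖ψ i j‖ ^ 2 ≤ 0 := Finset.sum_nonpos fun i _ => h i
    rw [hψ] at h0; linarith
  obtain ⟨p₀, hp₀⟩ := hrow
  have hlam1_pos : 0 < lam1 := by
    set e : Fin 2 × Fin a → ℂ := fun q => if q = p₀ then 1 else 0 with he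
    have hnorm : ∑ q, ‖e q‖ ^ 2 = 1 := by
      rw [he]
      simp only [show ∀ q : Fin 2 × Fin a,
          ‖if q = p₀ then (1 : ℂ) else 0‖ ^ 2 = if q = p₀ then (1 : ℝ) else 0
        from fun q => by split <;> simp, Finset.sum_ite_eq', Finset.mem_univ, if_true]
    have happ : ∀ j, (ψᴴ *ᵥ e) j = star (ψ p₀ j) := by
      intro j
      simp [he, mulVec, dotProduct, conjTranspose_apply, mul_ite, mul_one, mul_zero,
        Finset.sum_ite_eq']
    have h2 := aux_quad_le (Matrix.isHermitian_mul_conjTranspose_self ψ) e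
    rw [aux_quad_eq, hnorm, mul_one] at h2
    have h3 : 0 < ∑ j, ‖(ψᴴ *ᵥ e) j‖ ^ 2 := by
      have : ∑ j, ‖(ψᴴ *ᵥ e) j‖ ^ 2 = ∑ j, ‖ψ p₀ j‖ ^ 2 :=
        Finset.sum_congr rfl fun j _ => by
          rw [happ j]; simp [Complex.star_def, Complex.norm_conj]
      rw [this]; exact hp₀
    exact lt_of_lt_of_le h3 h2
  clear_value lam1' lam1 ψ'
  have hψne : ψ ≠ 0 := by
    intro h0
    rw [h0] at hψ
    simp at hψ
  have hrank_pos : 0 < ψ.rank := aux_rank_pos hψne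
  have hrank'_pos : 0 < ψ'.rank := by omega
  have hlam1'_pos : 0 < lam1' := by linarith
  refine ⟨hr2, hr1, hlam1_le, hlam1'_le, ?_⟩
  have hR : (1 : ℝ) ≤ (ψ.rank : ℝ) := by exact_mod_cast hrank_pos
  have hR' : (1 : ℝ) ≤ (ψ'.rank : ℝ) := by exact_mod_cast hrank'_pos
  have hRle : (ψ'.rank : ℝ) ≤ 2 * (ψ.rank : ℝ) := by exact_mod_cast hr1
  have hpos1 : 0 < (ψ'.rank : ℝ) * lam1' := mul_pos (by linarith) hlam1'_pos
  have hpos2 : 0 < (ψ.rank : ℝ) * lam1 := mul_pos (by linarith) hlam1_pos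
  have hle4 : (ψ'.rank : ℝ) * lam1' ≤ 4 * ((ψ.rank : ℝ) * lam1) := by
    have s1 : (ψ'.rank : ℝ) * lam1' ≤ (2 * (ψ.rank : ℝ)) * lam1' :=
      mul_le_mul_of_nonneg_right hRle (le_of_lt hlam1'_pos)
    have s2 : (2 * (ψ.rank : ℝ)) * lam1' ≤ (2 * (ψ.rank : ℝ)) * (2 * lam1) :=
      mul_le_mul_of_nonneg_left hlam1'_le (by linarith)
    have s3 : (2 * (ψ.rank : ℝ)) * (2 * lam1) = 4 * ((ψ.rank : ℝ) * lam1) := by ring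
    linarith [s1, s2, s3]
  calc Real.logb 2 ((ψ'.rank : ℝ) * lam1')
      ≤ Real.logb 2 (4 * ((ψ.rank : ℝ) * lam1)) :=
        Real.logb_le_logb_of_le (by norm_num) hpos1 hle4
    _ = Real.logb 2 4 + Real.logb 2 ((ψ.rank : ℝ) * lam1) :=
        Real.logb_mul (by norm_num) (ne_of_gt hpos2)
    _ = Real.logb 2 ((ψ.rank : ℝ) * lam1) + 2 := by
        have h4 : Real.logb 2 4 = 2 := by
          rw [show (4 : ℝ) = 2 ^ (2 : ℕ) by norm_num, Real.logb_pow,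
            Real.logb_self_eq_one (by norm_num)]
          norm_num
        rw [h4]; ring
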